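/- Let s₁ < … < s_g be the lengths of all maximal palindromes of T ending at position i with differences d_j = s_j − s_{j−1} (d₁ = s₁). For any 1 < j < g, if d_{j+1} ≠ d_j then d_{j+1} ≥ d_j + d_{j−1}. -/

import Mathlib

variable {α : Type*}

def IsPal (P : List α) : Prop := P.reverse = P

def MPE (T : List α) (i : ℕ) : Set ℕ :=
  {k | 0 < k ∧ k ≤ i ∧ IsPal ((T.take i).drop (i - k)) ∧
    (k = i ∨ i = T.length ∨ T[i - k - 1]? ≠ T[i]?)}

def diffs (s : ℕ → ℕ) (j : ℕ) : ℕ := if j = 0 then s 0 else s j - s (j - 1)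

section Aux

variable {T : List α} {i B C : ℕ}

private lemma lenS (hC : C ≤ i) (hiT : i ≤ T.length) :
    ((T.take i).drop (i - C)).length = C := by
  simp only [List.length_drop, List.length_take]
  omega

/-- The palindromic suffix of length `B` is also a prefix of the palindromic
suffix of length `C`. -/
private lemma core (hBC : B < C) (hC : C ≤ i) (hiT : i ≤ T.length)
    (pB : IsPal ((T.take i).drop (i - B))) (pC : IsPal ((T.take i).drop (i - C))) :
    ((T.take i).drop (i - C)).take B = (T.take i).drop (i - B) := by
  have hlen : ((T.take i).drop (i - C)).length = C := lenS hC hiT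
  have hdd : ((T.take i).drop (i - C)).drop (C - B) = (T.take i).drop (i - B) := by
    rw [List.drop_drop]
    congr 1
    omega
  have h1 : (((T.take i).drop (i - C)).take B).reverse = (T.take i).drop (i - B) := by
    rw [List.reverse_take, pC, hlen]
    exact hdd
  calc ((T.take i).drop (i - C)).take B
      = (((T.take i).drop (i - C)).take B).reverse.reverse := (List.reverse_reverse _).symm
    _ = ((T.take i).drop (i - B)).reverse := by rw [h1]
    _ = (T.take i).drop (i - B) := pB

/-- Periodicity: the long palindromic suffix has period `C - B`. -/
private lemma periodC (hBC : B < C) (hC : C ≤ i) (hiT : i ≤ T.length)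
    (pB : IsPal ((T.take i).drop (i - B))) (pC : IsPal ((T.take i).drop (i - C))) :
    ((T.take i).drop (i - C)).take B = ((T.take i).drop (i - C)).drop (C - B) := by
  rw [core hBC hC hiT pB pC, List.drop_drop]
  congr 1
  omega

/-- The suffix of length `B - (C - B)` is a palindrome. -/
private lemma pal_sub (hBC : B < C) (hC : C ≤ i) (hiT : i ≤ T.length)
    (heB : C - B < B)
    (pB : IsPal ((T.take i).drop (i - B))) (pC : IsPal ((T.take i).drop (i - C))) :
    IsPal ((T.take i).drop (i - (B - (C - B)))) := by
  set e := C - B with he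
  have hSB : ((T.take i).drop (i - C)).drop e = (T.take i).drop (i - B) := by
    rw [List.drop_drop]; congr 1; omega
  -- period of S B : take (B - e) = drop e
  have hper : ((T.take i).drop (i - B)).take (B - e) = ((T.take i).drop (i - B)).drop e := by
    conv_rhs => rw [← core hBC hC hiT pB pC, List.drop_take, hSB]
  have hS : (T.take i).drop (i - (B - e)) = ((T.take i).drop (i - B)).drop e := by
    rw [List.drop_drop]; congr 1; omega
  have hlenB : ((T.take i).drop (i - B)).length = B := lenS (by omega) hiT
  rw [hS]
  show (((T.take i).drop (i - B)).drop e).reverse = _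
  rw [List.reverse_drop, pB, hlenB, ← hper]

/-- The character preceding the suffix of length `B - (C-B)` agrees with the
character preceding the suffix of length `B`. -/
private lemma elem_eq (hB : 0 < B) (hBC : B < C) (hC : C ≤ i) (hiT : i ≤ T.length)
    (heB : C - B < B)
    (pB : IsPal ((T.take i).drop (i - B))) (pC : IsPal ((T.take i).drop (i - C))) :
    T[i - (B - (C - B)) - 1]? = T[i - B - 1]? := by
  set e := C - B with he
  have he1 : 1 ≤ e := by omega
  have hper := periodC hBC hC hiT pB pC
  have h1 : (((T.take i).drop (i - C)).take B)[e - 1]? = ((T.take i).drop (i - C))[e - 1]? := by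
    rw [List.getElem?_take, if_pos (by omega)]
  have h2 : (((T.take i).drop (i - C)).drop e)[e - 1]? = ((T.take i).drop (i - C))[e + (e - 1)]? :=
    List.getElem?_drop
  have key : ((T.take i).drop (i - C))[e - 1]? = ((T.take i).drop (i - C))[e + (e - 1)]? := by
    rw [← h1, hper, h2]
  have hg : ∀ m, (i - C) + m < i → ((T.take i).drop (i - C))[m]? = T[(i - C) + m]? := by
    intro m hm
    rw [List.getElem?_drop, List.getElem?_take, if_pos hm]
  rw [hg (e - 1) (by omega), hg (e + (e - 1)) (by omega)] at key
  have e1 : (i - C) + (e - 1) = i - B - 1 := by omega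
  have e2 : (i - C) + (e + (e - 1)) = i - (B - e) - 1 := by omega
  rw [e1, e2] at key
  exact key.symm

private lemma blocked_of_mem {k : ℕ} (hk : k ∈ MPE T i) (hki : k < i) (hiT : i ≤ T.length) :
    T[i - k - 1]? ≠ T[i]? := by
  obtain ⟨hk0, hki', hpal, hdisj⟩ := hk
  rcases hdisj with h | h | h
  · omega
  · have h1 : i - k - 1 < T.length := by omega
    have h2 : T[i]? = none := by
      rw [List.getElem?_eq_none]
      omega
    rw [h2, List.getElem?_eq_getElem h1]
    simp
  · exact h

end Aux

/-- If `s 0 < s 1 < … < s (g-1)` enumerates the lengths of all maximal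
palindromes of `T` ending at position `i`, then whenever the difference
sequence strictly changes it satisfies the Fibonacci-like growth
`d (j+1) ≥ d j + d (j-1)` (here `j ≥ 1`, corresponding to `1 < j < g` in
1-indexed notation). -/
theorem diffs_fibonacci_growth (T : List α) (i : ℕ) (hi : 1 ≤ i)
    (hiT : i ≤ T.length) (s : ℕ → ℕ) (g : ℕ)
    (hmono : ∀ j j', j < j' → j' < g → s j < s j')
    (hrange : ∀ k, (∃ j < g, s j = k) ↔ k ∈ MPE T i) :
    ∀ j, 1 ≤ j → j + 1 < g → diffs s (j + 1) ≠ diffs s j →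
      diffs s j + diffs s (j - 1) ≤ diffs s (j + 1) := by
  intro j hj1 hjg hne
  set A := s (j - 1) with hA
  set B := s j with hB
  set C := s (j + 1) with hC
  have hAB : A < B := hmono (j - 1) j (by omega) (by omega)
  have hBC : B < C := hmono j (j + 1) (by omega) hjg
  have hAmem : A ∈ MPE T i := (hrange A).mp ⟨j - 1, by omega, rfl⟩
  have hBmem : B ∈ MPE T i := (hrange B).mp ⟨j, by omega, rfl⟩
  have hCmem : C ∈ MPE T i := (hrange C).mp ⟨j + 1, hjg, rfl⟩
  obtain ⟨hA0, hAi, hApal, -⟩ := hAmem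
  obtain ⟨hB0, hBi, hBpal, -⟩ := hBmem
  obtain ⟨hC0, hCi, hCpal, -⟩ := hCmem
  have hBlti : B < i := by omega
  have hBblk : T[i - B - 1]? ≠ T[i]? :=
    blocked_of_mem ((hrange B).mp ⟨j, by omega, rfl⟩) hBlti hiT
  -- rewrite the diffs
  have hd1 : diffs s (j + 1) = C - B := by
    simp only [diffs, if_neg (by omega : ¬ j + 1 = 0)]
    congr 1
  have hd2 : diffs s j = B - A := by
    simp only [diffs, if_neg (by omega : ¬ j = 0)]
    rfl
  rw [hd1, hd2]
  rw [hd1, hd2] at hne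
  -- the key construction: if C - B < B then B - (C - B) is a maximal palindrome length
  have hkey : C - B < B → (B - (C - B)) ∈ MPE T i := by
    intro hlt
    refine ⟨by omega, by omega, pal_sub hBC hCi hiT hlt hBpal hCpal, ?_⟩
    right; right
    rw [elem_eq hB0 hBC hCi hiT hlt hBpal hCpal]
    exact hBblk
  -- Step 1: C - B > B - A
  have hstep1 : B - A < C - B := by
    rcases Nat.lt_trichotomy (C - B) (B - A) with h | h | h
    · exfalso
      have hlt : C - B < B := by omega
      obtain ⟨m, hm, hsm⟩ := (hrange _).mpr (hkey hlt)
      have h1 : A < B - (C - B) := by omega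
      have h2 : B - (C - B) < B := by omega
      rcases Nat.lt_trichotomy m (j - 1) with hm1 | hm1 | hm1
      · have := hmono m (j - 1) hm1 (by omega); omega
      · rw [hm1] at hsm; omega
      · rcases Nat.lt_trichotomy m j with hm2 | hm2 | hm2
        · omega
        · rw [hm2] at hsm; omega
        · have := hmono j m hm2 hm; omega
    · exact absurd h hne
    · exact h
  -- Step 2
  rcases Nat.lt_or_ge (C - B) B with hlt | hge
  · -- B - (C - B) ∈ MPE, and it is < A
    obtain ⟨m, hm, hsm⟩ := (hrange _).mpr (hkey hlt)
    have h2 : B - (C - B) < A := by omega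
    have hmj : m < j - 1 := by
      rcases Nat.lt_trichotomy m (j - 1) with hm1 | hm1 | hm1
      · exact hm1
      · rw [hm1] at hsm; omega
      · have := hmono (j - 1) m hm1 hm; omega
    have hj2 : 2 ≤ j := by omega
    have hle : B - (C - B) ≤ s (j - 2) := by
      rcases Nat.lt_trichotomy m (j - 2) with hm1 | hm1 | hm1
      · have := hmono m (j - 2) hm1 (by omega); omega
      · rw [hm1] at hsm; omega
      · omega
    have hs2A : s (j - 2) < A := hmono (j - 2) (j - 1) (by omega) (by omega)
    have hd3 : diffs s (j - 1) = A - s (j - 2) := by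
      simp only [diffs, if_neg (by omega : ¬ j - 1 = 0)]
      rw [show j - 1 - 1 = j - 2 from by omega]
    rw [hd3]
    omega
  · -- C - B ≥ B
    have hD' : diffs s (j - 1) ≤ A := by
      by_cases hj : j = 1
      · subst hj
        simp [diffs]
        exact le_rfl
      · simp only [diffs, if_neg (by omega : ¬ j - 1 = 0)]
        exact Nat.sub_le _ _
    omega
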